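/- Let k ≥ 1 be an integer, n ≥ 3, 0 ≤ a < (n-2)/2, 0 < b, a ≤ b < a+1, p = 2n/(n-2+2(b-a)), and let κ_{ij} > 0 and α_{ij}, β_{ij} > 1 with α_{ij} + β_{ij} = p for all 1 ≤ i, j ≤ k. Suppose u₁, …, u_k and v₁, …, v_k are continuous functions [0, ∞) → (0, ∞) satisfying, for every r ≥ 0 and every i, the integral equations u_i(r) = u_i(0) − ∫₀^r s^{2a+1-n} (∫₀^s t^{n-1-bp} Σ_{j=1}^{k} κ_{ij} u_i(t)^{α_{ij}-1} u_j(t)^{β_{ij}} dt) ds and v_i(r) = v_i(0) − ∫₀^r s^{2a+1-n} (∫₀^s t^{n-1-bp} Σ_{j=1}^{k} κ_{ij} v_i(t)^{α_{ij}-1} v_j(t)^{β_{ij}} dt) ds (all the integrals being finite; note n − bp > 0 and 2a + 2 − bp > 0 under the stated parameter assumptions, so the integrals converge). If u_i(0) = v_i(0) for all 1 ≤ i ≤ k, then u_i ≡ v_i on [0, ∞) for all 1 ≤ i ≤ k. -/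

import Mathlib

open MeasureTheory Real Filter Topology

noncomputable section


lemma rpow_lip {γ m B x y : ℝ} (hγ : 0 < γ) (hm : 0 < m) (hmB : m ≤ B)
    (hx : x ∈ Set.Icc m B) (hy : y ∈ Set.Icc m B) :
    |x ^ γ - y ^ γ| ≤ γ * (m ^ (γ-1) + B ^ (γ-1)) * |x - y| := by
  have hconv : Convex ℝ (Set.Icc m B) := convex_Icc m B
  have hderiv : ∀ z ∈ Set.Icc m B,
      HasDerivWithinAt (fun w : ℝ => w ^ γ) (γ * z ^ (γ-1)) (Set.Icc m B) z := by
    intro z hz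
    exact (Real.hasDerivAt_rpow_const (Or.inl (ne_of_gt (lt_of_lt_of_le hm hz.1)))).hasDerivWithinAt
  have hbound : ∀ z ∈ Set.Icc m B, ‖γ * z ^ (γ-1)‖ ≤ γ * (m ^ (γ-1) + B ^ (γ-1)) := by
    intro z hz
    have hz0 : 0 < z := lt_of_lt_of_le hm hz.1
    rw [Real.norm_eq_abs, abs_mul, abs_of_pos hγ, abs_of_pos (Real.rpow_pos_of_pos hz0 _)]
    apply mul_le_mul_of_nonneg_left _ hγ.le
    rcases le_or_gt 0 (γ - 1) with h | h
    · have h1 : z ^ (γ-1) ≤ B ^ (γ-1) := Real.rpow_le_rpow hz0.le hz.2 h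
      have h2 : (0:ℝ) ≤ m ^ (γ-1) := Real.rpow_nonneg hm.le _
      linarith
    · have h1 : z ^ (γ-1) ≤ m ^ (γ-1) := Real.rpow_le_rpow_of_nonpos hm hz.1 h.le
      have h2 : (0:ℝ) ≤ B ^ (γ-1) := Real.rpow_nonneg (hm.trans_le hmB).le _
      linarith
  have := hconv.norm_image_sub_le_of_norm_hasDerivWithin_le hderiv hbound hy hx
  simpa [Real.norm_eq_abs] using this

lemma prod_lip {m B A Be x1 y1 x2 y2 : ℝ} (hm : 0 < m) (hmB : m ≤ B)
    (hA : 0 < A) (hBe : 0 < Be)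
    (hx1 : x1 ∈ Set.Icc m B) (hy1 : y1 ∈ Set.Icc m B)
    (hx2 : x2 ∈ Set.Icc m B) (hy2 : y2 ∈ Set.Icc m B) :
    |x1 ^ A * y1 ^ Be - x2 ^ A * y2 ^ Be| ≤
      (A * (m ^ (A-1) + B ^ (A-1)) * B ^ Be) * |x1 - x2|
      + (B ^ A * (Be * (m ^ (Be-1) + B ^ (Be-1)))) * |y1 - y2| := by
  have h1 : x1 ^ A * y1 ^ Be - x2 ^ A * y2 ^ Be
      = (x1 ^ A - x2 ^ A) * y1 ^ Be + x2 ^ A * (y1 ^ Be - y2 ^ Be) := by ring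
  have hy1nn : (0:ℝ) ≤ y1 := hm.le.trans hy1.1
  have hx2nn : (0:ℝ) ≤ x2 := hm.le.trans hx2.1
  have hy1B : y1 ^ Be ≤ B ^ Be := Real.rpow_le_rpow hy1nn hy1.2 hBe.le
  have hx2B : x2 ^ A ≤ B ^ A := Real.rpow_le_rpow hx2nn hx2.2 hA.le
  have e1 := rpow_lip hA hm hmB hx1 hx2
  have e2 := rpow_lip hBe hm hmB hy1 hy2
  calc |x1 ^ A * y1 ^ Be - x2 ^ A * y2 ^ Be|
      ≤ |x1 ^ A - x2 ^ A| * (y1 ^ Be) + (x2 ^ A) * |y1 ^ Be - y2 ^ Be| := by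
        rw [h1]
        refine (abs_add_le _ _).trans ?_
        rw [abs_mul, abs_mul, abs_of_nonneg (Real.rpow_nonneg hy1nn _),
          abs_of_nonneg (Real.rpow_nonneg hx2nn _)]
    _ ≤ (A * (m ^ (A-1) + B ^ (A-1)) * |x1 - x2|) * B ^ Be
        + B ^ A * ((Be * (m ^ (Be-1) + B ^ (Be-1))) * |y1 - y2|) := by
        have hBBe : (0:ℝ) ≤ B ^ Be := Real.rpow_nonneg (hm.trans_le hmB).le _
        have hBA : (0:ℝ) ≤ B ^ A := Real.rpow_nonneg (hm.trans_le hmB).le _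
        have l1 : (0:ℝ) ≤ A * (m ^ (A-1) + B ^ (A-1)) * |x1 - x2| := by
          have := Real.rpow_nonneg hm.le (A-1)
          have := Real.rpow_nonneg (hm.trans_le hmB).le (A-1)
          positivity
        refine add_le_add (mul_le_mul e1 hy1B (Real.rpow_nonneg hy1nn _) l1)
          (mul_le_mul hx2B e2 (abs_nonneg _) hBA)
    _ = _ := by ring

set_option maxHeartbeats 1000000 in
theorem stmt {k n : ℕ} (hk : 1 ≤ k) (hn : 3 ≤ n) (a b p : ℝ)
    (ha0 : 0 ≤ a) (ha : a < ((n:ℝ)-2)/2) (hb0 : 0 < b) (hab : a ≤ b) (hba : b < a + 1)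
    (hp : p = 2*(n:ℝ)/((n:ℝ)-2+2*(b-a)))
    (κ α β : Fin k → Fin k → ℝ)
    (hκ : ∀ i j, 0 < κ i j) (hα : ∀ i j, 1 < α i j) (hβ : ∀ i j, 1 < β i j)
    (hαβ : ∀ i j, α i j + β i j = p)
    (u v : Fin k → ℝ → ℝ)
    (hucont : ∀ i, ContinuousOn (u i) (Set.Ici 0))
    (hvcont : ∀ i, ContinuousOn (v i) (Set.Ici 0))
    (hupos : ∀ i, ∀ r : ℝ, 0 ≤ r → 0 < u i r)
    (hvpos : ∀ i, ∀ r : ℝ, 0 ≤ r → 0 < v i r)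
    (huint₁ : ∀ i, ∀ s : ℝ, 0 ≤ s → IntervalIntegrable
      (fun t => t ^ ((n:ℝ)-1-b*p) * ∑ j, κ i j * u i t ^ (α i j - 1) * u j t ^ (β i j))
      volume 0 s)
    (hvint₁ : ∀ i, ∀ s : ℝ, 0 ≤ s → IntervalIntegrable
      (fun t => t ^ ((n:ℝ)-1-b*p) * ∑ j, κ i j * v i t ^ (α i j - 1) * v j t ^ (β i j))
      volume 0 s)
    (huint₂ : ∀ i, ∀ r : ℝ, 0 ≤ r → IntervalIntegrable
      (fun s => s ^ (2*a+1-(n:ℝ)) * ∫ t in (0:ℝ)..s,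
        t ^ ((n:ℝ)-1-b*p) * ∑ j, κ i j * u i t ^ (α i j - 1) * u j t ^ (β i j))
      volume 0 r)
    (hvint₂ : ∀ i, ∀ r : ℝ, 0 ≤ r → IntervalIntegrable
      (fun s => s ^ (2*a+1-(n:ℝ)) * ∫ t in (0:ℝ)..s,
        t ^ ((n:ℝ)-1-b*p) * ∑ j, κ i j * v i t ^ (α i j - 1) * v j t ^ (β i j))
      volume 0 r)
    (hueq : ∀ i, ∀ r : ℝ, 0 ≤ r →
      u i r = u i 0 - ∫ s in (0:ℝ)..r, s ^ (2*a+1-(n:ℝ)) * ∫ t in (0:ℝ)..s,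
        t ^ ((n:ℝ)-1-b*p) * ∑ j, κ i j * u i t ^ (α i j - 1) * u j t ^ (β i j))
    (hveq : ∀ i, ∀ r : ℝ, 0 ≤ r →
      v i r = v i 0 - ∫ s in (0:ℝ)..r, s ^ (2*a+1-(n:ℝ)) * ∫ t in (0:ℝ)..s,
        t ^ ((n:ℝ)-1-b*p) * ∑ j, κ i j * v i t ^ (α i j - 1) * v j t ^ (β i j))
    (h0 : ∀ i, u i 0 = v i 0) :
    ∀ i, ∀ r : ℝ, 0 ≤ r → u i r = v i r := by
  by_contra hcon
  push_neg at hcon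
  obtain ⟨i₀, R, hR0, hneq⟩ := hcon
  haveI : Nonempty (Fin k) := ⟨⟨0, by omega⟩⟩
  have hn3 : (3:ℝ) ≤ (n:ℝ) := by exact_mod_cast hn
  have hD : 0 < (n:ℝ)-2+2*(b-a) := by linarith
  have hbp : b*p = 2*(n:ℝ)*b/((n:ℝ)-2+2*(b-a)) := by rw [hp]; ring
  have hd1 : 0 < (n:ℝ) - b*p := by
    rw [hbp, sub_pos, div_lt_iff₀ hD]
    nlinarith [mul_pos (by linarith : (0:ℝ) < (n:ℝ)) (by nlinarith : (0:ℝ) < (n:ℝ)-2-2*a)]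
  have hq1 : 0 < 2*a+2 - b*p := by
    rw [hbp, sub_pos, div_lt_iff₀ hD]
    nlinarith [mul_pos (by linarith : (0:ℝ) < a+1-b) (by nlinarith : (0:ℝ) < (n:ℝ)-2-2*a)]
  set cc : ℝ := 2*a+1-(n:ℝ) with hccdef
  set dd : ℝ := (n:ℝ)-1-b*p with hdddef
  set q : ℝ := 2*a+1-b*p with hqdef
  have hd : (-1:ℝ) < dd := by rw [hdddef]; linarith
  have hdd1 : 0 < dd + 1 := by rw [hdddef]; linarith
  have hq : (-1:ℝ) < q := by rw [hqdef]; linarith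
  have hqq : 0 < q + 1 := by rw [hqdef]; linarith
  have hcq : cc + (dd+1) = q := by rw [hccdef, hdddef, hqdef]; ring
  -- uniform bounds on [0, R]
  have hRIcc : (Set.Icc (0:ℝ) R).Nonempty := ⟨0, le_refl 0, hR0⟩
  have hsubI : Set.Icc (0:ℝ) R ⊆ Set.Ici 0 := fun x hx => hx.1
  have hbounds : ∀ i : Fin k, ∃ mi Bi : ℝ, 0 < mi ∧ ∀ t ∈ Set.Icc (0:ℝ) R,
      (mi ≤ u i t ∧ u i t ≤ Bi) ∧ (mi ≤ v i t ∧ v i t ≤ Bi) := by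
    intro i
    obtain ⟨t1, ht1, h1⟩ := isCompact_Icc.exists_isMinOn hRIcc ((hucont i).mono hsubI)
    obtain ⟨t2, ht2, h2⟩ := isCompact_Icc.exists_isMinOn hRIcc ((hvcont i).mono hsubI)
    obtain ⟨t3, ht3, h3⟩ := isCompact_Icc.exists_isMaxOn hRIcc ((hucont i).mono hsubI)
    obtain ⟨t4, ht4, h4⟩ := isCompact_Icc.exists_isMaxOn hRIcc ((hvcont i).mono hsubI)
    refine ⟨min (u i t1) (v i t2), max (u i t3) (v i t4),
      lt_min (hupos i t1 ht1.1) (hvpos i t2 ht2.1), fun t ht => ⟨⟨?_, ?_⟩, ?_, ?_⟩⟩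
    · exact (min_le_left _ _).trans (isMinOn_iff.mp h1 t ht)
    · exact (isMaxOn_iff.mp h3 t ht).trans (le_max_left _ _)
    · exact (min_le_right _ _).trans (isMinOn_iff.mp h2 t ht)
    · exact (isMaxOn_iff.mp h4 t ht).trans (le_max_right _ _)
  choose mf Bf hmfpos hmfB using hbounds
  have hkne : (Finset.univ : Finset (Fin k)).Nonempty := Finset.univ_nonempty
  set m : ℝ := Finset.univ.inf' hkne mf with hmdef
  set Bb : ℝ := Finset.univ.sup' hkne Bf with hBbdef
  have hm0 : 0 < m := by
    rw [hmdef, Finset.lt_inf'_iff]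
    exact fun i _ => hmfpos i
  have hmem_u : ∀ i, ∀ t ∈ Set.Icc (0:ℝ) R, u i t ∈ Set.Icc m Bb := by
    intro i t ht
    exact ⟨(Finset.inf'_le mf (Finset.mem_univ i)).trans ((hmfB i t ht).1.1),
      ((hmfB i t ht).1.2).trans (Finset.le_sup' Bf (Finset.mem_univ i))⟩
  have hmem_v : ∀ i, ∀ t ∈ Set.Icc (0:ℝ) R, v i t ∈ Set.Icc m Bb := by
    intro i t ht
    exact ⟨(Finset.inf'_le mf (Finset.mem_univ i)).trans ((hmfB i t ht).2.1),
      ((hmfB i t ht).2.2).trans (Finset.le_sup' Bf (Finset.mem_univ i))⟩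
  have hmBb : m ≤ Bb := by
    have := hmem_u i₀ 0 ⟨le_refl 0, hR0⟩
    exact this.1.trans this.2
  have hBb0 : 0 < Bb := hm0.trans_le hmBb
  -- Lipschitz constants
  set L : ℝ → ℝ := fun γ => γ * (m ^ (γ-1) + Bb ^ (γ-1)) with hLdef
  have hLnn : ∀ γ : ℝ, 0 < γ → 0 ≤ L γ := by
    intro γ hγ
    have h1 := Real.rpow_nonneg hm0.le (γ-1)
    have h2 := Real.rpow_nonneg hBb0.le (γ-1)
    rw [hLdef]; positivity
  set K : Fin k → ℝ := fun i => ∑ j, κ i j *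
    (L (α i j - 1) * Bb ^ β i j + Bb ^ (α i j - 1) * L (β i j)) with hKdef
  have hKnn : ∀ i, 0 ≤ K i := by
    intro i
    apply Finset.sum_nonneg
    intro j _
    have h1 := hLnn (α i j - 1) (by linarith [hα i j])
    have h2 := hLnn (β i j) (by linarith [hβ i j])
    have h3 := Real.rpow_nonneg hBb0.le (β i j)
    have h4 := Real.rpow_nonneg hBb0.le (α i j - 1)
    have := (hκ i j).le
    positivity
  set Ktot : ℝ := ∑ i, K i with hKtotdef
  have hKtotnn : 0 ≤ Ktot := Finset.sum_nonneg fun i _ => hKnn i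
  -- the difference function
  set W : ℝ → ℝ := fun t => ∑ i, |u i t - v i t| with hWdef
  have hWnn : ∀ t, 0 ≤ W t := fun t => Finset.sum_nonneg fun i _ => abs_nonneg _
  have hWle : ∀ (i) (t : ℝ), |u i t - v i t| ≤ W t := by
    intro i t
    simp only [hWdef]
    exact Finset.single_le_sum (f := fun l => |u l t - v l t|) (fun j _ => abs_nonneg _)
      (Finset.mem_univ i)
  -- Lipschitz estimate for the nonlinearity
  have hLipSum : ∀ i : Fin k, ∀ t ∈ Set.Icc (0:ℝ) R,
      |(∑ j, κ i j * u i t ^ (α i j - 1) * u j t ^ (β i j))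
        - ∑ j, κ i j * v i t ^ (α i j - 1) * v j t ^ (β i j)| ≤ K i * W t := by
    intro i t ht
    rw [← Finset.sum_sub_distrib]
    refine (Finset.abs_sum_le_sum_abs _ _).trans ?_
    rw [hKdef]
    simp only [Finset.sum_mul]
    apply Finset.sum_le_sum
    intro j _
    have hAij : 0 < α i j - 1 := by linarith [hα i j]
    have hBij : 0 < β i j := by linarith [hβ i j]
    have e : κ i j * u i t ^ (α i j - 1) * u j t ^ (β i j)
        - κ i j * v i t ^ (α i j - 1) * v j t ^ (β i j)
      = κ i j * (u i t ^ (α i j - 1) * u j t ^ (β i j)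
        - v i t ^ (α i j - 1) * v j t ^ (β i j)) := by ring
    rw [e, abs_mul, abs_of_pos (hκ i j)]
    have hb := prod_lip hm0 hmBb hAij hBij (hmem_u i t ht) (hmem_u j t ht)
      (hmem_v i t ht) (hmem_v j t ht)
    have h1 := hWle i t
    have h2 := hWle j t
    have hc1 : 0 ≤ L (α i j - 1) * Bb ^ β i j :=
      mul_nonneg (hLnn _ hAij) (Real.rpow_nonneg hBb0.le _)
    have hc2 : 0 ≤ Bb ^ (α i j - 1) * L (β i j) :=
      mul_nonneg (Real.rpow_nonneg hBb0.le _) (hLnn _ hBij)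
    calc κ i j * |u i t ^ (α i j - 1) * u j t ^ (β i j)
          - v i t ^ (α i j - 1) * v j t ^ (β i j)|
        ≤ κ i j * (L (α i j - 1) * Bb ^ β i j * W t + Bb ^ (α i j - 1) * L (β i j) * W t) := by
          apply mul_le_mul_of_nonneg_left _ (hκ i j).le
          refine hb.trans ?_
          rw [hLdef]
          exact add_le_add (mul_le_mul_of_nonneg_left h1 hc1) (mul_le_mul_of_nonneg_left h2 hc2)
      _ = κ i j * (L (α i j - 1) * Bb ^ β i j + Bb ^ (α i j - 1) * L (β i j)) * W t := by ring
  -- the set where u = v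
  set Z : Set ℝ := {s | s ∈ Set.Icc (0:ℝ) R ∧ ∀ i, u i s = v i s} with hZdef
  have hZclosed : IsClosed Z := by
    have hZeq : Z = ⋂ i : Fin k, (Set.Icc (0:ℝ) R ∩ (fun s => u i s - v i s) ⁻¹' {0}) := by
      ext s
      simp only [hZdef, Set.mem_setOf_eq, Set.mem_iInter, Set.mem_inter_iff, Set.mem_preimage,
        Set.mem_singleton_iff, sub_eq_zero, forall_and, forall_const]
    rw [hZeq]
    refine isClosed_iInter fun i => ?_
    exact ContinuousOn.preimage_isClosed_of_isClosed
      (((hucont i).mono hsubI).sub ((hvcont i).mono hsubI)) isClosed_Icc isClosed_singleton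
  set T : Set ℝ := {t | t ∈ Set.Icc (0:ℝ) R ∧ Set.Icc 0 t ⊆ Z} with hTdef
  have hT0 : (0:ℝ) ∈ T := by
    refine ⟨⟨le_refl 0, hR0⟩, fun s hs => ?_⟩
    have hs0 : s = 0 := le_antisymm hs.2 hs.1
    subst hs0
    exact ⟨⟨le_refl 0, hR0⟩, h0⟩
  have hTne : T.Nonempty := ⟨0, hT0⟩
  have hTbdd : BddAbove T := ⟨R, fun t ht => ht.1.2⟩
  set rs : ℝ := sSup T with hrsdef
  have hrs0 : 0 ≤ rs := le_csSup hTbdd hT0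
  have hrsR : rs ≤ R := csSup_le hTne fun t ht => ht.1.2
  have hTZ : T ⊆ Z := fun t ht => ht.2 ⟨ht.1.1, le_refl t⟩
  have hrsZ : rs ∈ Z :=
    (hZclosed.closure_subset_iff.mpr hTZ) (csSup_mem_closure hTne hTbdd)
  have hIccZ : Set.Icc (0:ℝ) rs ⊆ Z := by
    intro s hs
    rcases lt_or_eq_of_le hs.2 with h | h
    · obtain ⟨t, htT, hlt⟩ := exists_lt_of_lt_csSup hTne h
      exact htT.2 ⟨hs.1, hlt.le⟩
    · exact h ▸ hrsZ
  have huvZ : ∀ t ∈ Set.Icc (0:ℝ) rs, ∀ i, u i t = v i t := fun t ht i => (hIccZ ht).2 i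
  have hrsltR : rs < R := by
    rcases lt_or_eq_of_le hrsR with h | h
    · exact h
    · exact absurd (huvZ R ⟨hR0, h.ge⟩ i₀) hneq
  -- choose ε
  have htend : Tendsto (fun ε : ℝ => Ktot * (((rs+ε) ^ (q+1) - rs ^ (q+1)) / ((dd+1)*(q+1))))
      (𝓝 0) (𝓝 0) := by
    have h1 : ContinuousAt (fun x : ℝ => x ^ (q+1)) rs :=
      Real.continuousAt_rpow_const _ _ (Or.inr hqq.le)
    have h2 : Tendsto (fun ε : ℝ => rs + ε) (𝓝 0) (𝓝 rs) := by
      simpa [Pi.add_def] using (continuous_const.add continuous_id).tendsto (0:ℝ)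
    have h3 : Tendsto (fun ε : ℝ => (rs+ε) ^ (q+1) - rs ^ (q+1)) (𝓝 0) (𝓝 0) := by
      have h4 : Tendsto (fun ε : ℝ => (rs+ε) ^ (q+1)) (𝓝 0) (𝓝 (rs ^ (q+1))) := by
        have := h1.tendsto.comp h2
        simpa [Function.comp_def] using this
      have h5 : Tendsto (fun _ : ℝ => rs ^ (q+1)) (𝓝 0) (𝓝 (rs ^ (q+1))) := tendsto_const_nhds
      simpa using h4.sub h5
    have := (h3.div_const ((dd+1)*(q+1))).const_mul Ktot
    simpa using this
  have hev1 : ∀ᶠ ε in 𝓝[>] (0:ℝ),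
      Ktot * (((rs+ε) ^ (q+1) - rs ^ (q+1)) / ((dd+1)*(q+1))) < 1 :=
    (htend.mono_left nhdsWithin_le_nhds).eventually_lt_const one_pos
  have hev2 : ∀ᶠ ε in 𝓝[>] (0:ℝ), ε < R - rs :=
    eventually_nhdsWithin_of_eventually_nhds (Filter.Tendsto.eventually_lt_const (by linarith)
      (tendsto_id (x := 𝓝 (0:ℝ))))
  have hev3 : ∀ᶠ ε in 𝓝[>] (0:ℝ), (0:ℝ) < ε := eventually_mem_nhdsWithin
  obtain ⟨ε, hεK, hεR, hε0⟩ := (hev1.and (hev2.and hev3)).exists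
  set r₁ : ℝ := rs + ε with hr₁def
  have hr₁R : r₁ ≤ R := by rw [hr₁def]; linarith
  have hr₁0 : 0 ≤ r₁ := by rw [hr₁def]; linarith
  set δ : ℝ := (r₁ ^ (q+1) - rs ^ (q+1)) / ((dd+1)*(q+1)) with hδdef
  have hKδ : Ktot * δ < 1 := hεK
  have hδnn : 0 ≤ δ := by
    rw [hδdef]
    apply div_nonneg _ (by positivity)
    have : rs ^ (q+1) ≤ r₁ ^ (q+1) :=
      Real.rpow_le_rpow hrs0 (by rw [hr₁def]; linarith) hqq.le
    linarith
  -- maximum of W on [0, r₁]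
  have hWcont : ContinuousOn W (Set.Icc 0 r₁) := by
    apply continuousOn_finset_sum
    intro i _
    have hsub : Set.Icc (0:ℝ) r₁ ⊆ Set.Ici 0 := fun x hx => hx.1
    exact (((hucont i).mono hsub).sub ((hvcont i).mono hsub)).abs
  obtain ⟨t₀, ht₀mem, ht₀max⟩ := isCompact_Icc.exists_isMaxOn ⟨0, le_refl 0, hr₁0⟩ hWcont
  set M : ℝ := W t₀ with hMdef
  have hM0 : 0 ≤ M := hWnn t₀
  have hMax : ∀ s ∈ Set.Icc (0:ℝ) r₁, W s ≤ M := isMaxOn_iff.mp ht₀max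
  -- main estimate
  have hmain : ∀ i : Fin k, ∀ r ∈ Set.Icc rs r₁, |u i r - v i r| ≤ K i * M * δ := by
    intro i r hr
    have hr0 : 0 ≤ r := hrs0.trans hr.1
    have hrR : r ≤ R := hr.2.trans hr₁R
    set Fu : ℝ → ℝ := fun t => t ^ dd * ∑ j, κ i j * u i t ^ (α i j - 1) * u j t ^ (β i j)
      with hFudef
    set Fv : ℝ → ℝ := fun t => t ^ dd * ∑ j, κ i j * v i t ^ (α i j - 1) * v j t ^ (β i j)
      with hFvdef
    have hFuint : ∀ s : ℝ, 0 ≤ s → IntervalIntegrable Fu volume 0 s := fun s hs => huint₁ i s hs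
    have hFvint : ∀ s : ℝ, 0 ≤ s → IntervalIntegrable Fv volume 0 s := fun s hs => hvint₁ i s hs
    set Gu : ℝ → ℝ := fun s => s ^ cc * ∫ t in (0:ℝ)..s, Fu t with hGudef
    set Gv : ℝ → ℝ := fun s => s ^ cc * ∫ t in (0:ℝ)..s, Fv t with hGvdef
    have hGuint : IntervalIntegrable Gu volume 0 r := huint₂ i r hr0
    have hGvint : IntervalIntegrable Gv volume 0 r := hvint₂ i r hr0
    have hFeq : Set.EqOn Fu Fv (Set.Icc 0 rs) := by
      intro t ht
      have huv := huvZ t ht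
      simp only [hFudef, hFvdef]
      congr 1
      apply Finset.sum_congr rfl
      intro j _
      rw [huv i, huv j]
    have hIeq : ∀ s ∈ Set.Icc (0:ℝ) rs, (∫ t in (0:ℝ)..s, Fu t) = ∫ t in (0:ℝ)..s, Fv t := by
      intro s hs
      apply intervalIntegral.integral_congr
      intro t ht
      rw [Set.uIcc_of_le hs.1] at ht
      exact hFeq ⟨ht.1, ht.2.trans hs.2⟩
    have hGeq : Set.EqOn (fun s => Gu s - Gv s) (fun _ => (0:ℝ)) (Set.Icc 0 rs) := by
      intro s hs
      simp only [hGudef, hGvdef, hIeq s hs, sub_self]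
    have step1 : u i r - v i r = -(∫ s in (0:ℝ)..r, (Gu s - Gv s)) := by
      rw [intervalIntegral.integral_sub hGuint hGvint, hueq i r hr0, hveq i r hr0, h0 i]
      ring
    have hGsub : IntervalIntegrable (fun s => Gu s - Gv s) volume 0 r := hGuint.sub hGvint
    have hsub1 : Set.uIcc (0:ℝ) rs ⊆ Set.uIcc (0:ℝ) r := by
      rw [Set.uIcc_of_le hrs0, Set.uIcc_of_le hr0]
      exact Set.Icc_subset_Icc le_rfl hr.1
    have hsub2 : Set.uIcc rs r ⊆ Set.uIcc (0:ℝ) r := by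
      rw [Set.uIcc_of_le hr.1, Set.uIcc_of_le hr0]
      exact Set.Icc_subset_Icc hrs0 le_rfl
    have hsplit : (∫ s in (0:ℝ)..r, (Gu s - Gv s)) = ∫ s in rs..r, (Gu s - Gv s) := by
      rw [← intervalIntegral.integral_add_adjacent_intervals (hGsub.mono_set hsub1)
        (hGsub.mono_set hsub2)]
      have : (∫ s in (0:ℝ)..rs, (Gu s - Gv s)) = 0 := by
        rw [intervalIntegral.integral_congr (g := fun _ => (0:ℝ))
          (by rw [Set.uIcc_of_le hrs0]; exact hGeq)]
        simp
      rw [this, zero_add]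
    -- pointwise bound on (rs, r]
    have hptbound : ∀ s ∈ Set.Ioc rs r, ‖Gu s - Gv s‖ ≤ (K i * M / (dd+1)) * s ^ q := by
      intro s hs
      have hs0 : 0 < s := lt_of_le_of_lt hrs0 hs.1
      have hsR : s ≤ R := hs.2.trans hrR
      have hsr₁ : s ≤ r₁ := hs.2.trans hr.2
      -- inner integral difference
      have hinner : (∫ t in (0:ℝ)..s, Fu t) - (∫ t in (0:ℝ)..s, Fv t)
          = ∫ t in rs..s, (Fu t - Fv t) := by
        have hu1 : Set.uIcc (0:ℝ) rs ⊆ Set.uIcc (0:ℝ) s := by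
          rw [Set.uIcc_of_le hrs0, Set.uIcc_of_le hs0.le]
          exact Set.Icc_subset_Icc le_rfl hs.1.le
        have hu2 : Set.uIcc rs s ⊆ Set.uIcc (0:ℝ) s := by
          rw [Set.uIcc_of_le hs.1.le, Set.uIcc_of_le hs0.le]
          exact Set.Icc_subset_Icc hrs0 le_rfl
        rw [← intervalIntegral.integral_add_adjacent_intervals
            ((hFuint s hs0.le).mono_set hu1) ((hFuint s hs0.le).mono_set hu2),
          ← intervalIntegral.integral_add_adjacent_intervals
            ((hFvint s hs0.le).mono_set hu1) ((hFvint s hs0.le).mono_set hu2),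
          hIeq rs ⟨hrs0, le_rfl⟩,
          intervalIntegral.integral_sub ((hFuint s hs0.le).mono_set hu2)
            ((hFvint s hs0.le).mono_set hu2)]
        ring
      have hinner_bound : |(∫ t in (0:ℝ)..s, Fu t) - (∫ t in (0:ℝ)..s, Fv t)|
          ≤ K i * M * s ^ (dd+1) / (dd+1) := by
        rw [hinner]
        have hgint : IntervalIntegrable (fun t : ℝ => t ^ dd * (K i * M)) volume rs s :=
          (intervalIntegral.intervalIntegrable_rpow' hd).mul_const _
        have hae : ∀ᵐ t ∂(volume.restrict (Set.uIoc rs s)),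
            ‖Fu t - Fv t‖ ≤ t ^ dd * (K i * M) := by
          rw [Set.uIoc_of_le hs.1.le]
          refine ae_restrict_of_forall_mem measurableSet_Ioc ?_
          intro t ht
          have ht0 : 0 < t := lt_of_le_of_lt hrs0 ht.1
          have htR : t ≤ R := ht.2.trans hsR
          have htr₁ : t ≤ r₁ := ht.2.trans hsr₁
          have hfactor : Fu t - Fv t = t ^ dd *
              ((∑ j, κ i j * u i t ^ (α i j - 1) * u j t ^ (β i j))
              - ∑ j, κ i j * v i t ^ (α i j - 1) * v j t ^ (β i j)) := by
            simp only [hFudef, hFvdef]; ring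
          rw [Real.norm_eq_abs, hfactor, abs_mul,
            abs_of_nonneg (Real.rpow_nonneg ht0.le _)]
          apply mul_le_mul_of_nonneg_left _ (Real.rpow_nonneg ht0.le _)
          refine (hLipSum i t ⟨ht0.le, htR⟩).trans ?_
          exact mul_le_mul_of_nonneg_left (hMax t ⟨ht0.le, htr₁⟩) (hKnn i)
        refine (intervalIntegral.norm_integral_le_abs_of_norm_le hae hgint).trans ?_
        rw [intervalIntegral.integral_mul_const, integral_rpow (Or.inl hd)]
        have h1 : rs ^ (dd+1) ≤ s ^ (dd+1) := Real.rpow_le_rpow hrs0 hs.1.le hdd1.le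
        have h2 : 0 ≤ rs ^ (dd+1) := Real.rpow_nonneg hrs0 _
        have h3 : 0 ≤ K i * M := mul_nonneg (hKnn i) hM0
        rw [abs_of_nonneg (mul_nonneg (div_nonneg (by linarith) hdd1.le) h3)]
        rw [div_mul_eq_mul_div, mul_comm (s ^ (dd+1) - rs ^ (dd+1)) (K i * M),
          mul_div_assoc, mul_div_assoc]
        apply mul_le_mul_of_nonneg_left _ h3
        apply div_le_div_of_nonneg_right _ hdd1.le
        linarith
      -- conclude
      have hGfactor : Gu s - Gv s = s ^ cc *
          ((∫ t in (0:ℝ)..s, Fu t) - (∫ t in (0:ℝ)..s, Fv t)) := by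
        simp only [hGudef, hGvdef]; ring
      rw [Real.norm_eq_abs, hGfactor, abs_mul, abs_of_nonneg (Real.rpow_nonneg hs0.le _)]
      calc s ^ cc * |(∫ t in (0:ℝ)..s, Fu t) - (∫ t in (0:ℝ)..s, Fv t)|
          ≤ s ^ cc * (K i * M * s ^ (dd+1) / (dd+1)) :=
            mul_le_mul_of_nonneg_left hinner_bound (Real.rpow_nonneg hs0.le _)
        _ = (K i * M / (dd+1)) * (s ^ cc * s ^ (dd+1)) := by ring
        _ = (K i * M / (dd+1)) * s ^ q := by rw [← Real.rpow_add hs0, hcq]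
    -- put it together
    rw [step1, hsplit, abs_neg]
    have hHint : IntervalIntegrable (fun s : ℝ => (K i * M / (dd+1)) * s ^ q) volume rs r :=
      (intervalIntegral.intervalIntegrable_rpow' hq).const_mul _
    have hae2 : ∀ᵐ s ∂(volume.restrict (Set.uIoc rs r)),
        ‖Gu s - Gv s‖ ≤ (K i * M / (dd+1)) * s ^ q := by
      rw [Set.uIoc_of_le hr.1]
      exact ae_restrict_of_forall_mem measurableSet_Ioc hptbound
    refine (intervalIntegral.norm_integral_le_abs_of_norm_le hae2 hHint).trans ?_
    rw [intervalIntegral.integral_const_mul, integral_rpow (Or.inl hq)]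
    have h1 : rs ^ (q+1) ≤ r ^ (q+1) := Real.rpow_le_rpow hrs0 hr.1 hqq.le
    have h1' : r ^ (q+1) ≤ r₁ ^ (q+1) := Real.rpow_le_rpow hr0 hr.2 hqq.le
    have h3 : 0 ≤ K i * M := mul_nonneg (hKnn i) hM0
    rw [abs_of_nonneg (mul_nonneg (div_nonneg h3 hdd1.le) (div_nonneg (by linarith) hqq.le))]
    rw [hδdef]
    have heq : K i * M / (dd+1) * ((r ^ (q+1) - rs ^ (q+1))/(q+1))
        = K i * M * ((r ^ (q+1) - rs ^ (q+1))/((dd+1)*(q+1))) := by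
      field_simp
    rw [heq]
    apply mul_le_mul_of_nonneg_left _ h3
    apply div_le_div_of_nonneg_right _ (by positivity)
    linarith
  -- conclude M = 0
  have hMbound : M ≤ Ktot * δ * M := by
    rcases le_or_gt t₀ rs with h | h
    · have : M = 0 := by
        rw [hMdef, hWdef]
        apply Finset.sum_eq_zero
        intro i _
        rw [huvZ t₀ ⟨ht₀mem.1, h⟩ i, sub_self, abs_zero]
      rw [this, mul_zero]
    · have hmem : t₀ ∈ Set.Icc rs r₁ := ⟨h.le, ht₀mem.2⟩
      calc M = ∑ i, |u i t₀ - v i t₀| := by rw [hMdef, hWdef]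
        _ ≤ ∑ i, K i * M * δ := Finset.sum_le_sum fun i _ => hmain i t₀ hmem
        _ = Ktot * δ * M := by
            rw [hKtotdef, Finset.sum_mul, Finset.sum_mul]
            exact Finset.sum_congr rfl fun i _ => by ring
  have hMzero : M = 0 := by nlinarith [hMbound, hKδ, hM0]
  -- final contradiction
  have hr₁T : r₁ ∈ T := by
    refine ⟨⟨hr₁0, hr₁R⟩, fun s hs => ?_⟩
    have hWs : W s = 0 := le_antisymm (hMzero ▸ hMax s hs) (hWnn s)
    refine ⟨⟨hs.1, hs.2.trans hr₁R⟩, fun i => ?_⟩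
    have := hWle i s
    rw [hWs] at this
    have := le_antisymm this (abs_nonneg _)
    exact sub_eq_zero.mp (abs_eq_zero.mp this)
  have : r₁ ≤ rs := le_csSup hTbdd hr₁T
  rw [hr₁def] at this
  linarith
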